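/- Let A be an AUF algebra and e ∈ A a generating idempotent. Then the restriction map ψ ↦ ψ|_{eAe} is a ℂ-linear bijection from SLF(A) onto SLF(eAe), where eAe = {x ∈ A : exe = x} is the (unital, finite-dimensional) corner algebra. -/

import Mathlib

open scoped BigOperators

universe u v

section BasicDefs

variable (R : Type u)

section MulOnly
variable [NonUnitalRing R]

/-- An idempotent element. -/
def IsIdem (e : R) : Prop := e * e = e

/-- Two idempotents are orthogonal. -/
def OrthIdem (e f : R) : Prop := e * f = 0 ∧ f * e = 0

/-- `f ≤ e` for idempotents: `f * e = f` and `e * f = f`. -/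
def SubIdem (f e : R) : Prop := f * e = f ∧ e * f = f

/-- A primitive idempotent. -/
def IsPrimIdem (e : R) : Prop :=
  IsIdem R e ∧ e ≠ 0 ∧ ∀ f : R, IsIdem R f → SubIdem R f e → f = 0 ∨ f = e

/-- Equivalence of idempotents: partial isometries `u ∈ eRf`, `v ∈ fRe` with
`u * v = e`, `v * u = f`. -/
def IdemEquiv (e f : R) : Prop :=
  ∃ u v : R, e * u * f = u ∧ f * v * e = v ∧ u * v = e ∧ v * u = f

/-- A generating idempotent: it has a finite orthogonal primitive decomposition
    such that every primitive idempotent is equivalent to a member of it. -/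
def IsGenIdem (e : R) : Prop :=
  IsIdem R e ∧ ∃ (n : ℕ) (ε : Fin n → R),
    (∀ k, IsPrimIdem R (ε k)) ∧ (∀ k l, k ≠ l → OrthIdem R (ε k) (ε l)) ∧
    e = ∑ k, ε k ∧ ∀ p : R, IsPrimIdem R p → ∃ k, IdemEquiv R p (ε k)

/-- An idempotent of the corner algebra `fRf`. -/
def IsIdemIn (f e : R) : Prop := IsIdem R e ∧ f * e * f = e

/-- A primitive idempotent of the corner algebra `fRf`. -/
def IsPrimIdemIn (f e : R) : Prop :=
  IsIdemIn R f e ∧ e ≠ 0 ∧ ∀ g : R, IsIdemIn R f g → SubIdem R g e → g = 0 ∨ g = e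

/-- Equivalence of idempotents within the corner algebra `fRf`. -/
def IdemEquivIn (f p q : R) : Prop :=
  ∃ u v : R, f * u * f = u ∧ f * v * f = v ∧ p * u * q = u ∧ q * v * p = v ∧
    u * v = p ∧ v * u = q

/-- A generating idempotent of the corner algebra `fRf`. -/
def IsGenIdemIn (f e : R) : Prop :=
  IsIdemIn R f e ∧ ∃ (n : ℕ) (ε : Fin n → R),
    (∀ k, IsPrimIdemIn R f (ε k)) ∧ (∀ k l, k ≠ l → OrthIdem R (ε k) (ε l)) ∧
    e = ∑ k, ε k ∧ ∀ p : R, IsPrimIdemIn R f p → ∃ k, IdemEquivIn R f p (ε k)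

end MulOnly

section Subspaces
variable [NonUnitalRing R] [Module ℂ R] [SMulCommClass ℂ R R] [IsScalarTower ℂ R R]

/-- The subspace `Re = {x | x * e = x}`. -/
def subAe (e : R) : Submodule ℂ R where
  carrier := {x | x * e = x}
  add_mem' := by
    intro a b ha hb
    simp only [Set.mem_setOf_eq] at *
    rw [add_mul, ha, hb]
  zero_mem' := by simp
  smul_mem' := by
    intro c x hx
    simp only [Set.mem_setOf_eq] at *
    rw [smul_mul_assoc, hx]

/-- The corner subspace `eRf = {x | e * x * f = x}`. -/
def subCorner (e f : R) : Submodule ℂ R where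
  carrier := {x | e * x * f = x}
  add_mem' := by
    intro a b ha hb
    simp only [Set.mem_setOf_eq] at *
    rw [mul_add, add_mul, ha, hb]
  zero_mem' := by simp
  smul_mem' := by
    intro c x hx
    simp only [Set.mem_setOf_eq] at *
    rw [mul_smul_comm, smul_mul_assoc, hx]

/-- A symmetric linear functional. -/
def IsSLF (ψ : R →ₗ[ℂ] ℂ) : Prop := ∀ x y : R, ψ (x * y) = ψ (y * x)

/-- Witness data for an AUF algebra: a family of pairwise orthogonal idempotents with
finite-dimensional corners spanning the algebra. -/
def IsAUFWitness {I : Type v} (E : I → R) : Prop :=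
  (∀ i, IsIdem R (E i)) ∧ (∀ i j, i ≠ j → OrthIdem R (E i) (E j)) ∧
  (∀ i j, FiniteDimensional ℂ (subCorner R (E i) (E j))) ∧
  (⨆ i, ⨆ j, subCorner R (E i) (E j)) = ⊤

/-- An almost unital and finite-dimensional (AUF) algebra. -/
def IsAUF : Prop := ∃ (I : Type u) (E : I → R), IsAUFWitness R E

end Subspaces

end BasicDefs

section Aux

variable {A : Type u} [NonUnitalRing A] [Module ℂ A] [SMulCommClass ℂ A A] [IsScalarTower ℂ A A]

lemma mem_subCorner {e f x : A} : x ∈ subCorner A e f ↔ e * x * f = x := Iff.rfl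

lemma corner_left {e x : A} (he : IsIdem A e) (hx : e * x * e = x) : e * x = x := by
  have h : e * (e * x * e) = e * x * e := by
    simp only [← mul_assoc]; rw [he]
  rw [hx] at h; exact h

lemma corner_right {e x : A} (he : IsIdem A e) (hx : e * x * e = x) : x * e = x := by
  have h : (e * x * e) * e = e * x * e := by
    simp only [mul_assoc]; rw [he]
  rw [hx] at h; exact h

lemma mem_corner_of {e x : A} (h1 : e * x = x) (h2 : x * e = x) : x ∈ subCorner A e e := by
  show e * x * e = x
  rw [h1, h2]

/-- decomposition of an idempotent with finite-dimensional corner into primitive idempotents -/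
lemma exists_prim_decomp (d : ℕ) : ∀ (e : A), IsIdem A e →
    ∀ (_ : FiniteDimensional ℂ (subCorner A e e)),
    Module.finrank ℂ (subCorner A e e) ≤ d →
    ∃ (n : ℕ) (p : Fin n → A), (∀ m, IsPrimIdem A (p m)) ∧
      (∀ m m', m ≠ m' → p m * p m' = 0) ∧ (∀ m, SubIdem A (p m) e) ∧ (∑ m, p m) = e := by
  induction d with
  | zero =>
    intro e he hfd hrk
    have : e ∈ subCorner A e e := by
      show e * e * e = e; rw [he, he]
    have hbot : subCorner A e e = ⊥ := by
      have := Submodule.finrank_eq_zero (R := ℂ) (M := A) (S := subCorner A e e)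
      exact this.mp (Nat.le_zero.mp hrk)
    have he0 : e = 0 := by
      have := hbot ▸ this
      simpa using this
    exact ⟨0, ![], by simp, by simp, by simp, by simp [he0]⟩
  | succ d ih =>
    intro e he hfd hrk
    by_cases he0 : e = 0
    · exact ⟨0, ![], by simp, by simp, by simp, by simp [he0]⟩
    by_cases hprim : IsPrimIdem A e
    · refine ⟨1, ![e], by simpa, ?_, ?_, by simp⟩
      · intro m m' hmm'; exact absurd (Subsingleton.elim m m') hmm'
      · intro m; simp only [Matrix.cons_val_fin_one]; exact ⟨he, he⟩
    · have : ∃ f : A, IsIdem A f ∧ SubIdem A f e ∧ f ≠ 0 ∧ f ≠ e := by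
        simp only [IsPrimIdem, not_and_or] at hprim
        rcases hprim with h | h | h
        · exact absurd he h
        · exact absurd he0 h
        · push_neg at h
          obtain ⟨f, hf1, hf2, hf3, hf4⟩ := h
          exact ⟨f, hf1, hf2, hf3, hf4⟩
      obtain ⟨f, hfidem, hfe, hf0, hfne⟩ := this
      set g := e - f with hg
      have hee : e * e = e := he
      have hff : f * f = f := hfidem
      have hge1 : g * e = g := by
        simp only [hg, sub_mul, hee, hfe.1]
      have hge2 : e * g = g := by
        simp only [hg, mul_sub, hee, hfe.2]
      have hfg : f * g = 0 := by
        simp only [hg, mul_sub, hfe.1, hff, sub_self]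
      have hgf : g * f = 0 := by
        simp only [hg, sub_mul, hfe.2, hff, sub_self]
      have hgidem : IsIdem A g := by
        show g * g = g
        calc g * g = (e - f) * g := by rw [hg]
        _ = e * g - f * g := by rw [sub_mul]
        _ = g := by rw [hge2, hfg, sub_zero]
      have hsub : ∀ h : A, IsIdem A h → SubIdem A h e → subCorner A h h ≤ subCorner A e e := by
        intro h hh hhe x hx
        have hx' : h * x * h = x := hx
        show e * x * e = x
        calc e * x * e = e * (h * x * h) * e := by rw [hx']
        _ = (e * h) * x * (h * e) := by simp only [mul_assoc]
        _ = h * x * h := by rw [hhe.2, hhe.1]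
        _ = x := hx'
      have hmemself : ∀ h : A, IsIdem A h → h ∈ subCorner A h h := by
        intro h hh
        show h * h * h = h; rw [hh, hh]
      have hlt : ∀ h : A, IsIdem A h → SubIdem A h e → h ≠ e →
          subCorner A h h < subCorner A e e := by
        intro h hh hhe hne
        refine lt_of_le_of_ne (hsub h hh hhe) ?_
        intro hEq
        have : e ∈ subCorner A h h := hEq ▸ hmemself e he
        have : h * e * h = e := this
        rw [hhe.1, hh] at this
        exact hne this
      have hgne : g ≠ e := by
        intro hEq
        apply hf0
        have : e - f = e := hEq
        linear_combination (norm := abel) -this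
      have hffd : FiniteDimensional ℂ (subCorner A f f) :=
        Submodule.finiteDimensional_of_le (hsub f hfidem hfe)
      have hgfd : FiniteDimensional ℂ (subCorner A g g) :=
        Submodule.finiteDimensional_of_le (hsub g hgidem ⟨hge1, hge2⟩)
      have hfrk : Module.finrank ℂ (subCorner A f f) ≤ d := by
        have := Submodule.finrank_lt_finrank_of_lt (hlt f hfidem hfe hfne)
        omega
      have hgrk : Module.finrank ℂ (subCorner A g g) ≤ d := by
        have := Submodule.finrank_lt_finrank_of_lt (hlt g hgidem ⟨hge1, hge2⟩ hgne)
        omega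
      obtain ⟨n₁, p₁, hp₁, ho₁, hs₁, hsum₁⟩ := ih f hfidem hffd hfrk
      obtain ⟨n₂, p₂, hp₂, ho₂, hs₂, hsum₂⟩ := ih g hgidem hgfd hgrk
      refine ⟨n₁ + n₂, Fin.append p₁ p₂, ?_, ?_, ?_, ?_⟩
      · intro m
        induction m using Fin.addCases with
        | left m => rw [Fin.append_left]; exact hp₁ m
        | right m => rw [Fin.append_right]; exact hp₂ m
      · intro m m' hmm'
        induction m using Fin.addCases with
        | left m =>
          induction m' using Fin.addCases with
          | left m' =>
            rw [Fin.append_left, Fin.append_left]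
            exact ho₁ m m' (fun h => hmm' (by rw [h]))
          | right m' =>
            rw [Fin.append_left, Fin.append_right]
            calc p₁ m * p₂ m' = (p₁ m * f) * (g * p₂ m') := by rw [(hs₁ m).1, (hs₂ m').2]
            _ = p₁ m * (f * g) * p₂ m' := by simp only [mul_assoc]
            _ = 0 := by rw [hfg, mul_zero, zero_mul]
        | right m =>
          induction m' using Fin.addCases with
          | left m' =>
            rw [Fin.append_right, Fin.append_left]
            calc p₂ m * p₁ m' = (p₂ m * g) * (f * p₁ m') := by rw [(hs₂ m).1, (hs₁ m').2]
            _ = p₂ m * (g * f) * p₁ m' := by simp only [mul_assoc]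
            _ = 0 := by rw [hgf, mul_zero, zero_mul]
          | right m' =>
            rw [Fin.append_right, Fin.append_right]
            exact ho₂ m m' (fun h => hmm' (by rw [h]))
      · have trans : ∀ (q h : A), SubIdem A q h → SubIdem A h e → SubIdem A q e := by
          intro q h h1 h2
          constructor
          · calc q * e = (q * h) * e := by rw [h1.1]
            _ = q * (h * e) := by rw [mul_assoc]
            _ = q * h := by rw [h2.1]
            _ = q := h1.1
          · calc e * q = e * (h * q) := by rw [h1.2]
            _ = (e * h) * q := by rw [mul_assoc]
            _ = h * q := by rw [h2.2]
            _ = q := h1.2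
        intro m
        induction m using Fin.addCases with
        | left m => rw [Fin.append_left]; exact trans _ f (hs₁ m) hfe
        | right m => rw [Fin.append_right]; exact trans _ g (hs₂ m) ⟨hge1, hge2⟩
      · rw [Fin.sum_univ_add]
        simp only [Fin.append_left, Fin.append_right]
        rw [hsum₁, hsum₂, hg]
        abel

end Aux

section Aux2

variable {A : Type u} [NonUnitalRing A] [Module ℂ A] [SMulCommClass ℂ A A] [IsScalarTower ℂ A A]

structure GenSetup (A : Type u) [NonUnitalRing A] [Module ℂ A] [SMulCommClass ℂ A A]
    [IsScalarTower ℂ A A] (e : A) where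
  I : Type u
  dec : DecidableEq I
  E : I → A
  EE : ∀ i, E i * E i = E i
  Eorth : ∀ i j, i ≠ j → E i * E j = 0
  hsup : (⨆ q : I × I, subCorner A (E q.1) (E q.2)) = ⊤
  n : I → ℕ
  p : ∀ i, Fin (n i) → A
  u : ∀ i, Fin (n i) → A
  v : ∀ i, Fin (n i) → A
  psum : ∀ i, (∑ m, p i m) = E i
  porth : ∀ i m m', m ≠ m' → p i m * p i m' = 0
  pE : ∀ i m, p i m * E i = p i m
  Ep : ∀ i m, E i * p i m = p i m
  pu : ∀ i m, p i m * u i m = u i m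
  ue : ∀ i m, u i m * e = u i m
  ev : ∀ i m, e * v i m = v i m
  vp : ∀ i m, v i m * p i m = v i m
  uv : ∀ i m, u i m * v i m = p i m
  uvu : ∀ i m, u i m * (v i m * u i m) = u i m

attribute [instance] GenSetup.dec

namespace GenSetup

variable {e : A} (S : GenSetup A e)

def Cp (q : S.I × S.I) : Submodule ℂ A := subCorner A (S.E q.1) (S.E q.2)

lemma mem_Cp {q : S.I × S.I} {x : A} : x ∈ S.Cp q ↔ S.E q.1 * x * S.E q.2 = x := Iff.rfl

lemma Cp_left {q : S.I × S.I} {x : A} (hx : x ∈ S.Cp q) : S.E q.1 * x = x := by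
  have h : S.E q.1 * (S.E q.1 * x * S.E q.2) = S.E q.1 * x * S.E q.2 := by
    simp only [← mul_assoc]; rw [S.EE]
  rw [mem_Cp] at hx; rw [hx] at h; exact h

lemma Cp_right {q : S.I × S.I} {x : A} (hx : x ∈ S.Cp q) : x * S.E q.2 = x := by
  have h : (S.E q.1 * x * S.E q.2) * S.E q.2 = S.E q.1 * x * S.E q.2 := by
    simp only [mul_assoc]; rw [S.EE]
  rw [mem_Cp] at hx; rw [hx] at h; exact h

lemma vE : ∀ i m, S.v i m * S.E i = S.v i m := by
  intro i m
  calc S.v i m * S.E i = (S.v i m * S.p i m) * S.E i := by rw [S.vp]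
  _ = S.v i m * (S.p i m * S.E i) := by rw [mul_assoc]
  _ = S.v i m * S.p i m := by rw [S.pE]
  _ = S.v i m := S.vp i m

lemma Eu : ∀ i m, S.E i * S.u i m = S.u i m := by
  intro i m
  calc S.E i * S.u i m = S.E i * (S.p i m * S.u i m) := by rw [S.pu]
  _ = (S.E i * S.p i m) * S.u i m := by rw [mul_assoc]
  _ = S.p i m * S.u i m := by rw [S.Ep]
  _ = S.u i m := S.pu i m

/-- The compression map `x ↦ ∑ m, v m * (x * u m)`. -/
noncomputable def T (i : S.I) : A →ₗ[ℂ] A :=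
  ∑ m, (LinearMap.mulLeft ℂ (S.v i m)).comp (LinearMap.mulRight ℂ (S.u i m))

lemma T_apply (i : S.I) (x : A) : S.T i x = ∑ m, S.v i m * (x * S.u i m) := by
  simp [T, LinearMap.sum_apply]

lemma T_mem (i : S.I) (x : A) : S.T i x ∈ subCorner A e e := by
  rw [T_apply]
  refine Submodule.sum_mem _ fun m _ => mem_corner_of ?_ ?_
  · calc e * (S.v i m * (x * S.u i m)) = (e * S.v i m) * (x * S.u i m) := by rw [mul_assoc]
    _ = S.v i m * (x * S.u i m) := by rw [S.ev]
  · calc (S.v i m * (x * S.u i m)) * e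
        = S.v i m * (x * (S.u i m * e)) := by simp only [mul_assoc]
    _ = S.v i m * (x * S.u i m) := by rw [S.ue]

lemma isInternal : DirectSum.IsInternal S.Cp := by
  apply DirectSum.isInternal_submodule_of_iSupIndep_of_iSup_eq_top
  · rw [iSupIndep_def]
    intro q
    rw [Submodule.disjoint_def]
    intro x hxq hxr
    set π := (LinearMap.mulLeft ℂ (S.E q.1)).comp (LinearMap.mulRight ℂ (S.E q.2)) with hπ
    have h1 : π x = x := by
      show S.E q.1 * (x * S.E q.2) = x
      rw [Cp_right S hxq, Cp_left S hxq]
    have h2 : (⨆ (j) (_ : j ≠ q), S.Cp j) ≤ LinearMap.ker π := by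
      refine iSup_le fun r => iSup_le fun hr => ?_
      intro z hz
      have hne : r.1 ≠ q.1 ∨ r.2 ≠ q.2 := by
        by_contra hcon; push_neg at hcon; exact hr (Prod.ext hcon.1 hcon.2)
      have hz' : S.E r.1 * z * S.E r.2 = z := hz
      show S.E q.1 * (z * S.E q.2) = 0
      calc S.E q.1 * (z * S.E q.2) = S.E q.1 * ((S.E r.1 * z * S.E r.2) * S.E q.2) := by rw [hz']
      _ = (S.E q.1 * S.E r.1) * (z * (S.E r.2 * S.E q.2)) := by simp only [mul_assoc]
      _ = 0 := by
          rcases hne with h | h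
          · rw [S.Eorth _ _ (Ne.symm h), zero_mul]
          · rw [S.Eorth _ _ h, mul_zero, mul_zero]
    have h3 := h2 hxr
    rw [LinearMap.mem_ker] at h3
    rw [← h1]
    exact h3
  · exact S.hsup

noncomputable def F (φ : subCorner A e e →ₗ[ℂ] ℂ) (q : S.I × S.I) : S.Cp q →ₗ[ℂ] ℂ :=
  if q.1 = q.2 then
    φ.comp (((S.T q.1).comp (S.Cp q).subtype).codRestrict (subCorner A e e)
      (fun x => S.T_mem q.1 x))
  else 0

/-- The extension of `φ` to `A`. -/
noncomputable def psi (φ : subCorner A e e →ₗ[ℂ] ℂ) : A →ₗ[ℂ] ℂ :=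
  (DirectSum.toModule ℂ (S.I × S.I) ℂ (S.F φ)).comp
    ((LinearEquiv.ofBijective (DirectSum.coeLinearMap S.Cp) S.isInternal).symm.toLinearMap)

lemma psi_eq (φ : subCorner A e e →ₗ[ℂ] ℂ) (q : S.I × S.I) (z : A) (hz : z ∈ S.Cp q) :
    S.psi φ z = S.F φ q ⟨z, hz⟩ := by
  have h : (LinearEquiv.ofBijective (DirectSum.coeLinearMap S.Cp) S.isInternal).symm z
      = DirectSum.lof ℂ (S.I × S.I) (fun q => S.Cp q) q ⟨z, hz⟩ := by
    rw [LinearEquiv.symm_apply_eq]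
    show z = DirectSum.coeLinearMap S.Cp (DirectSum.lof ℂ (S.I × S.I) (fun q => S.Cp q) q ⟨z, hz⟩)
    rw [DirectSum.lof_eq_of,
      DirectSum.coeLinearMap_of]
  show (DirectSum.toModule ℂ (S.I × S.I) ℂ (S.F φ))
      ((LinearEquiv.ofBijective (DirectSum.coeLinearMap S.Cp) S.isInternal).symm z) = _
  rw [h, DirectSum.toModule_lof]

lemma psi_diag (φ : subCorner A e e →ₗ[ℂ] ℂ) (i : S.I) (z : A) (hz : z ∈ S.Cp (i, i)) :
    S.psi φ z = φ ⟨S.T i z, S.T_mem i z⟩ := by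
  rw [psi_eq S φ (i, i) z hz, F, if_pos rfl]
  rfl

lemma psi_off (φ : subCorner A e e →ₗ[ℂ] ℂ) (i j : S.I) (hij : i ≠ j) (z : A)
    (hz : z ∈ S.Cp (i, j)) : S.psi φ z = 0 := by
  rw [psi_eq S φ (i, j) z hz, F, if_neg hij]
  rfl

lemma sum_E_mul_sum_E {t t' : Finset S.I} (h : t ⊆ t') :
    ((∑ i ∈ t', S.E i) * (∑ i ∈ t, S.E i) = ∑ i ∈ t, S.E i) ∧
    ((∑ i ∈ t, S.E i) * (∑ i ∈ t', S.E i) = ∑ i ∈ t, S.E i) := by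
  constructor
  · rw [Finset.sum_mul_sum, Finset.sum_comm]
    refine Finset.sum_congr rfl fun i hi => ?_
    rw [Finset.sum_eq_single_of_mem i (h hi)]
    · exact S.EE i
    · intro b _ hb; exact S.Eorth b i hb
  · rw [Finset.sum_mul_sum]
    refine Finset.sum_congr rfl fun i hi => ?_
    rw [Finset.sum_eq_single_of_mem i (h hi)]
    · exact S.EE i
    · intro b _ hb; exact S.Eorth i b (Ne.symm hb)

lemma local_unit (x : A) :
    ∃ t : Finset S.I, (∑ i ∈ t, S.E i) * x = x ∧ x * (∑ i ∈ t, S.E i) = x := by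
  let S₀ : Submodule ℂ A :=
    { carrier := {x | ∃ t : Finset S.I, (∑ i ∈ t, S.E i) * x = x ∧ x * (∑ i ∈ t, S.E i) = x}
      add_mem' := by
        rintro a b ⟨t₁, h₁l, h₁r⟩ ⟨t₂, h₂l, h₂r⟩
        refine ⟨t₁ ∪ t₂, ?_, ?_⟩
        · have ha : (∑ i ∈ t₁ ∪ t₂, S.E i) * a = a := by
            calc (∑ i ∈ t₁ ∪ t₂, S.E i) * a
                = (∑ i ∈ t₁ ∪ t₂, S.E i) * ((∑ i ∈ t₁, S.E i) * a) := by rw [h₁l]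
            _ = ((∑ i ∈ t₁ ∪ t₂, S.E i) * (∑ i ∈ t₁, S.E i)) * a := by rw [mul_assoc]
            _ = (∑ i ∈ t₁, S.E i) * a := by
                  rw [(S.sum_E_mul_sum_E Finset.subset_union_left).1]
            _ = a := h₁l
          have hb : (∑ i ∈ t₁ ∪ t₂, S.E i) * b = b := by
            calc (∑ i ∈ t₁ ∪ t₂, S.E i) * b
                = (∑ i ∈ t₁ ∪ t₂, S.E i) * ((∑ i ∈ t₂, S.E i) * b) := by rw [h₂l]
            _ = ((∑ i ∈ t₁ ∪ t₂, S.E i) * (∑ i ∈ t₂, S.E i)) * b := by rw [mul_assoc]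
            _ = (∑ i ∈ t₂, S.E i) * b := by
                  rw [(S.sum_E_mul_sum_E Finset.subset_union_right).1]
            _ = b := h₂l
          rw [mul_add, ha, hb]
        · have ha : a * (∑ i ∈ t₁ ∪ t₂, S.E i) = a := by
            calc a * (∑ i ∈ t₁ ∪ t₂, S.E i)
                = (a * (∑ i ∈ t₁, S.E i)) * (∑ i ∈ t₁ ∪ t₂, S.E i) := by rw [h₁r]
            _ = a * ((∑ i ∈ t₁, S.E i) * (∑ i ∈ t₁ ∪ t₂, S.E i)) := by rw [mul_assoc]
            _ = a * (∑ i ∈ t₁, S.E i) := by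
                  rw [(S.sum_E_mul_sum_E Finset.subset_union_left).2]
            _ = a := h₁r
          have hb : b * (∑ i ∈ t₁ ∪ t₂, S.E i) = b := by
            calc b * (∑ i ∈ t₁ ∪ t₂, S.E i)
                = (b * (∑ i ∈ t₂, S.E i)) * (∑ i ∈ t₁ ∪ t₂, S.E i) := by rw [h₂r]
            _ = b * ((∑ i ∈ t₂, S.E i) * (∑ i ∈ t₁ ∪ t₂, S.E i)) := by rw [mul_assoc]
            _ = b * (∑ i ∈ t₂, S.E i) := by
                  rw [(S.sum_E_mul_sum_E Finset.subset_union_right).2]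
            _ = b := h₂r
          rw [add_mul, ha, hb]
      zero_mem' := ⟨∅, by simp, by simp⟩
      smul_mem' := by
        rintro c x ⟨t, hl, hr⟩
        exact ⟨t, by rw [mul_smul_comm, hl], by rw [smul_mul_assoc, hr]⟩ }
  have htop : (⊤ : Submodule ℂ A) ≤ S₀ := by
    rw [← S.hsup]
    refine iSup_le fun q => ?_
    intro z hz
    refine ⟨{q.1, q.2}, ?_, ?_⟩
    · rw [Finset.sum_mul]
      rw [Finset.sum_eq_single_of_mem q.1 (by simp)]
      · exact Cp_left S hz
      · intro b _ hb
        calc S.E b * z = S.E b * (S.E q.1 * z) := by rw [Cp_left S hz]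
        _ = (S.E b * S.E q.1) * z := by rw [mul_assoc]
        _ = 0 := by rw [S.Eorth b q.1 hb, zero_mul]
    · rw [Finset.mul_sum]
      rw [Finset.sum_eq_single_of_mem q.2 (by simp)]
      · exact Cp_right S hz
      · intro b _ hb
        calc z * S.E b = (z * S.E q.2) * S.E b := by rw [Cp_right S hz]
        _ = z * (S.E q.2 * S.E b) := by rw [mul_assoc]
        _ = 0 := by rw [S.Eorth q.2 b (Ne.symm hb), mul_zero]
  exact htop Submodule.mem_top

end GenSetup

end Aux2
section Aux3

variable {A : Type u} [NonUnitalRing A] [Module ℂ A] [SMulCommClass ℂ A A] [IsScalarTower ℂ A A]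
variable {e : A}

lemma corner_mul (hee : e * e = e) {x y : A} (hx : x ∈ subCorner A e e)
    (hy : y ∈ subCorner A e e) : x * y ∈ subCorner A e e :=
  mem_corner_of (by rw [← mul_assoc, corner_left hee hx]) (by rw [mul_assoc, corner_right hee hy])

lemma phi_congr (φ : ↥(subCorner A e e) →ₗ[ℂ] ℂ) {x y : A} {hx : x ∈ subCorner A e e}
    {hy : y ∈ subCorner A e e} (h : x = y) : φ ⟨x, hx⟩ = φ ⟨y, hy⟩ := by
  subst h; rfl

lemma phi_sum {σ : Type*} (φ : ↥(subCorner A e e) →ₗ[ℂ] ℂ) (s : Finset σ) (f : σ → A)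
    (hf : ∀ i, f i ∈ subCorner A e e) (h : (∑ i ∈ s, f i) ∈ subCorner A e e) :
    φ ⟨∑ i ∈ s, f i, h⟩ = ∑ i ∈ s, φ ⟨f i, hf i⟩ := by
  have h2 : (⟨∑ i ∈ s, f i, h⟩ : subCorner A e e) = ∑ i ∈ s, (⟨f i, hf i⟩ : subCorner A e e) := by
    apply Subtype.ext
    simp
  rw [h2, map_sum]

namespace GenSetup

variable (S : GenSetup A e)

lemma vxu_mem (i j : S.I) (m : Fin (S.n i)) (n : Fin (S.n j)) (x : A) :
    S.v i m * (x * S.u j n) ∈ subCorner A e e := by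
  refine mem_corner_of ?_ ?_
  · rw [← mul_assoc, S.ev]
  · rw [mul_assoc, mul_assoc, S.ue]

/-- the key insertion identity -/
lemma key_insert (i j : S.I) (x y : A) (hxr : x * S.E j = x) (m : Fin (S.n i)) :
    S.v i m * ((x * y) * S.u i m)
      = ∑ n, (S.v i m * (x * S.u j n)) * (S.v j n * (y * S.u i m)) := by
  calc S.v i m * ((x * y) * S.u i m)
      = S.v i m * (((x * S.E j) * y) * S.u i m) := by rw [hxr]
    _ = S.v i m * (((x * (∑ n, S.p j n)) * y) * S.u i m) := by rw [S.psum]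
    _ = ∑ n, S.v i m * (((x * S.p j n) * y) * S.u i m) := by
        simp only [Finset.mul_sum, Finset.sum_mul]
    _ = ∑ n, (S.v i m * (x * S.u j n)) * (S.v j n * (y * S.u i m)) := by
        refine Finset.sum_congr rfl fun n _ => ?_
        conv_lhs => rw [← S.uv j n]
        simp only [mul_assoc]

lemma psi_symm (hee : e * e = e) (φ : ↥(subCorner A e e) →ₗ[ℂ] ℂ)
    (hφ : ∀ (x y : A) (hx : x ∈ subCorner A e e) (hy : y ∈ subCorner A e e)
      (hxy : x * y ∈ subCorner A e e) (hyx : y * x ∈ subCorner A e e),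
        φ ⟨x * y, hxy⟩ = φ ⟨y * x, hyx⟩) :
    ∀ x y : A, S.psi φ (x * y) = S.psi φ (y * x) := by
  have core : ∀ (i j k l : S.I) (x y : A), x ∈ S.Cp (i, j) → y ∈ S.Cp (k, l) →
      S.psi φ (x * y) = S.psi φ (y * x) := by
    intro i j k l x y hx hy
    have xl : S.E i * x = x := S.Cp_left hx
    have xr : x * S.E j = x := S.Cp_right hx
    have yl : S.E k * y = y := S.Cp_left hy
    have yr : y * S.E l = y := S.Cp_right hy
    by_cases hjk : j = k
    · by_cases hli : l = i
      · rw [← hjk] at yl hy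
        rw [hli] at yr hy
        clear hjk hli
        -- x ∈ Cp (i,j), y ∈ Cp (j,i)
        have hxy : x * y ∈ S.Cp (i, i) := by
          show S.E i * (x * y) * S.E i = x * y
          calc S.E i * (x * y) * S.E i = (S.E i * x) * (y * S.E i) := by simp only [mul_assoc]
          _ = x * y := by rw [xl, yr]
        have hyx : y * x ∈ S.Cp (j, j) := by
          show S.E j * (y * x) * S.E j = y * x
          calc S.E j * (y * x) * S.E j = (S.E j * y) * (x * S.E j) := by simp only [mul_assoc]
          _ = y * x := by rw [yl, xr]
        rw [S.psi_diag φ i _ hxy, S.psi_diag φ j _ hyx]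
        have hab : ∀ (m : Fin (S.n i)) (n : Fin (S.n j)),
            (S.v i m * (x * S.u j n)) * (S.v j n * (y * S.u i m)) ∈ subCorner A e e :=
          fun m n => corner_mul hee (S.vxu_mem i j m n x) (S.vxu_mem j i n m y)
        have hba : ∀ (m : Fin (S.n i)) (n : Fin (S.n j)),
            (S.v j n * (y * S.u i m)) * (S.v i m * (x * S.u j n)) ∈ subCorner A e e :=
          fun m n => corner_mul hee (S.vxu_mem j i n m y) (S.vxu_mem i j m n x)
        have h1 : φ ⟨S.T i (x * y), S.T_mem i (x * y)⟩
            = ∑ m, ∑ n, φ ⟨(S.v i m * (x * S.u j n)) * (S.v j n * (y * S.u i m)), hab m n⟩ := by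
          rw [phi_congr φ (show S.T i (x * y) = ∑ m, ∑ n,
              (S.v i m * (x * S.u j n)) * (S.v j n * (y * S.u i m)) by
            rw [S.T_apply]
            exact Finset.sum_congr rfl fun m _ => S.key_insert i j x y xr m)
            (hy := Submodule.sum_mem _ fun m _ => Submodule.sum_mem _ fun n _ => hab m n)]
          rw [phi_sum φ _ _ (fun m => Submodule.sum_mem _ fun n _ => hab m n)]
          exact Finset.sum_congr rfl fun m _ => phi_sum φ _ _ (fun n => hab m n) _
        have h2 : φ ⟨S.T j (y * x), S.T_mem j (y * x)⟩
            = ∑ n, ∑ m, φ ⟨(S.v j n * (y * S.u i m)) * (S.v i m * (x * S.u j n)), hba m n⟩ := by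
          rw [phi_congr φ (show S.T j (y * x) = ∑ n, ∑ m,
              (S.v j n * (y * S.u i m)) * (S.v i m * (x * S.u j n)) by
            rw [S.T_apply]
            exact Finset.sum_congr rfl fun n _ => S.key_insert j i y x yr n)
            (hy := Submodule.sum_mem _ fun n _ => Submodule.sum_mem _ fun m _ => hba m n)]
          rw [phi_sum φ _ _ (fun n => Submodule.sum_mem _ fun m _ => hba m n)]
          exact Finset.sum_congr rfl fun n _ => phi_sum φ _ _ (fun m => hba m n) _
        rw [h1, h2, Finset.sum_comm]
        refine Finset.sum_congr rfl fun n _ => Finset.sum_congr rfl fun m _ => ?_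
        exact hφ _ _ (S.vxu_mem i j m n x) (S.vxu_mem j i n m y) (hab m n) (hba m n)
      · -- l ≠ i : y * x = 0 and x * y ∈ Cp (i, l) with i ≠ l
        have hyx0 : y * x = 0 := by
          calc y * x = (y * S.E l) * (S.E i * x) := by rw [yr, xl]
          _ = y * ((S.E l * S.E i) * x) := by simp only [mul_assoc]
          _ = 0 := by rw [S.Eorth l i hli, zero_mul, mul_zero]
        have hxy : x * y ∈ S.Cp (i, l) := by
          show S.E i * (x * y) * S.E l = x * y
          calc S.E i * (x * y) * S.E l = (S.E i * x) * (y * S.E l) := by simp only [mul_assoc]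
          _ = x * y := by rw [xl, yr]
        rw [hyx0, map_zero, S.psi_off φ i l (fun h => hli h.symm) _ hxy]
    · -- j ≠ k : x * y = 0 and y * x ∈ Cp (k, j) with k ≠ j
      have hxy0 : x * y = 0 := by
        calc x * y = (x * S.E j) * (S.E k * y) := by rw [xr, yl]
        _ = x * ((S.E j * S.E k) * y) := by simp only [mul_assoc]
        _ = 0 := by rw [S.Eorth j k hjk, zero_mul, mul_zero]
      have hyx : y * x ∈ S.Cp (k, j) := by
        show S.E k * (y * x) * S.E j = y * x
        calc S.E k * (y * x) * S.E j = (S.E k * y) * (x * S.E j) := by simp only [mul_assoc]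
        _ = y * x := by rw [yl, xr]
      rw [hxy0, map_zero, S.psi_off φ k j (fun h => hjk h.symm) _ hyx]
  have mid : ∀ (qy : S.I × S.I) (y : A), y ∈ S.Cp qy → ∀ x : A,
      S.psi φ (x * y) = S.psi φ (y * x) := by
    intro qy y hy x
    have hker : (⊤ : Submodule ℂ A) ≤ LinearMap.ker
        ((S.psi φ).comp (LinearMap.mulRight ℂ y) - (S.psi φ).comp (LinearMap.mulLeft ℂ y)) := by
      rw [← S.hsup]
      refine iSup_le fun qx => ?_
      intro z hz
      simp only [LinearMap.mem_ker, LinearMap.sub_apply, LinearMap.comp_apply,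
        LinearMap.mulRight_apply, LinearMap.mulLeft_apply]
      rw [core qx.1 qx.2 qy.1 qy.2 z y hz hy, sub_self]
    have h := hker (Submodule.mem_top (x := x))
    simp only [LinearMap.mem_ker, LinearMap.sub_apply, LinearMap.comp_apply,
      LinearMap.mulRight_apply, LinearMap.mulLeft_apply, sub_eq_zero] at h
    exact h
  intro x y
  have hker : (⊤ : Submodule ℂ A) ≤ LinearMap.ker
      ((S.psi φ).comp (LinearMap.mulLeft ℂ x) - (S.psi φ).comp (LinearMap.mulRight ℂ x)) := by
    rw [← S.hsup]
    refine iSup_le fun qy => ?_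
    intro z hz
    simp only [LinearMap.mem_ker, LinearMap.sub_apply, LinearMap.comp_apply,
      LinearMap.mulRight_apply, LinearMap.mulLeft_apply]
    rw [mid qy z hz x, sub_self]
  have h := hker (Submodule.mem_top (x := y))
  simp only [LinearMap.mem_ker, LinearMap.sub_apply, LinearMap.comp_apply,
    LinearMap.mulRight_apply, LinearMap.mulLeft_apply, sub_eq_zero] at h
  exact h

end GenSetup

end Aux3
section Aux4

variable {A : Type u} [NonUnitalRing A] [Module ℂ A] [SMulCommClass ℂ A A] [IsScalarTower ℂ A A]
variable {e : A}

namespace GenSetup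

variable (S : GenSetup A e)

lemma psi_restrict (hee : e * e = e) (φ : ↥(subCorner A e e) →ₗ[ℂ] ℂ)
    (hφ : ∀ (x y : A) (hx : x ∈ subCorner A e e) (hy : y ∈ subCorner A e e)
      (hxy : x * y ∈ subCorner A e e) (hyx : y * x ∈ subCorner A e e),
        φ ⟨x * y, hxy⟩ = φ ⟨y * x, hyx⟩)
    (nε : ℕ) (ε : Fin nε → A) (hsum : (∑ k, ε k) = e)
    (hεε : ∀ k, ε k * ε k = ε k) (hεorth : ∀ k l, k ≠ l → ε k * ε l = 0)
    (x : A) (hx : x ∈ subCorner A e e) : S.psi φ x = φ ⟨x, hx⟩ := by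
  have heε : ∀ k, e * ε k = ε k := by
    intro k
    rw [← hsum, Finset.sum_mul, Finset.sum_eq_single_of_mem k (Finset.mem_univ k)]
    · exact hεε k
    · intro b _ hb; exact hεorth b k hb
  have hεe : ∀ k, ε k * e = ε k := by
    intro k
    rw [← hsum, Finset.mul_sum, Finset.sum_eq_single_of_mem k (Finset.mem_univ k)]
    · exact hεε k
    · intro b _ hb; exact hεorth k b (Ne.symm hb)
  have hxl : e * x = x := corner_left hee hx
  have hxr : x * e = x := corner_right hee hx
  obtain ⟨t, htl, htr⟩ := S.local_unit x
  have hεxε_mem : ∀ k l : Fin nε, ε k * (x * ε l) ∈ subCorner A e e := by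
    intro k l
    refine mem_corner_of ?_ ?_
    · rw [← mul_assoc, heε]
    · rw [mul_assoc, mul_assoc, hεe]
  -- memberships used in step A
  have hvxε : ∀ (i : S.I) (m : Fin (S.n i)) (l : Fin nε),
      S.v i m * (x * ε l) ∈ subCorner A e e := by
    intro i m l
    refine mem_corner_of ?_ ?_
    · rw [← mul_assoc, S.ev]
    · rw [mul_assoc, mul_assoc, hεe]
  have hεu : ∀ (i : S.I) (m : Fin (S.n i)) (l : Fin nε),
      ε l * S.u i m ∈ subCorner A e e := by
    intro i m l
    refine mem_corner_of ?_ ?_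
    · rw [← mul_assoc, heε]
    · rw [mul_assoc, S.ue]
  have hεpxε_mem : ∀ (i : S.I) (m : Fin (S.n i)) (l : Fin nε),
      ε l * (S.p i m * (x * ε l)) ∈ subCorner A e e := by
    intro i m l
    have hswap : (ε l * S.u i m) * (S.v i m * (x * ε l)) = ε l * (S.p i m * (x * ε l)) := by
      conv_rhs => rw [← S.uv i m]
      simp only [mul_assoc]
    exact hswap ▸ corner_mul hee (hεu i m l) (hvxε i m l)
  -- Step B : φ x = ∑ l, φ (ε l * (x * ε l))
  have hB : φ ⟨x, hx⟩ = ∑ l, φ ⟨ε l * (x * ε l), hεxε_mem l l⟩ := by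
    have hdec : x = ∑ k, ∑ l, ε k * (x * ε l) := by
      calc x = e * (x * e) := by rw [hxr, hxl]
      _ = (∑ k, ε k) * (x * (∑ l, ε l)) := by rw [hsum]
      _ = ∑ k, ∑ l, ε k * (x * ε l) := by
          simp only [Finset.mul_sum, Finset.sum_mul]
          first | rfl | exact Finset.sum_comm | exact Finset.sum_comm.symm
    rw [phi_congr φ hdec
      (hy := Submodule.sum_mem _ fun k _ => Submodule.sum_mem _ fun l _ => hεxε_mem k l)]
    rw [phi_sum φ _ _ (fun k => Submodule.sum_mem _ fun l _ => hεxε_mem k l)]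
    rw [Finset.sum_congr rfl (fun k _ => phi_sum φ Finset.univ _ (fun l => hεxε_mem k l) _)]
    refine Finset.sum_congr rfl fun k _ => ?_
    rw [Finset.sum_eq_single_of_mem k (Finset.mem_univ k)]
    intro b _ hb
    have hmem1 : ε k * x ∈ subCorner A e e := mem_corner_of
      (by rw [← mul_assoc, heε]) (by rw [mul_assoc, hxr])
    have hmem2 : ε b ∈ subCorner A e e := mem_corner_of (heε b) (hεe b)
    have e1 : φ ⟨ε k * (x * ε b), hεxε_mem k b⟩
        = φ ⟨(ε k * x) * ε b, corner_mul hee hmem1 hmem2⟩ :=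
      phi_congr φ (mul_assoc _ _ _).symm
    have e2 : φ ⟨(ε k * x) * ε b, corner_mul hee hmem1 hmem2⟩
        = φ ⟨ε b * (ε k * x), corner_mul hee hmem2 hmem1⟩ :=
      hφ _ _ hmem1 hmem2 _ _
    have e3 : ε b * (ε k * x) = 0 := by rw [← mul_assoc, hεorth b k hb, zero_mul]
    have e4 : φ ⟨ε b * (ε k * x), corner_mul hee hmem2 hmem1⟩ = 0 := by
      rw [phi_congr φ e3 (hy := Submodule.zero_mem _)]
      exact map_zero φ
    rw [e1, e2, e4]
  -- Step A : psi x = ∑ l, φ (ε l * (x * ε l))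
  have hcomp : ∀ i j : S.I, S.E i * (x * S.E j) ∈ S.Cp (i, j) := by
    intro i j
    show S.E i * (S.E i * (x * S.E j)) * S.E j = S.E i * (x * S.E j)
    calc S.E i * (S.E i * (x * S.E j)) * S.E j
        = (S.E i * S.E i) * (x * (S.E j * S.E j)) := by simp only [mul_assoc]
      _ = S.E i * (x * S.E j) := by rw [S.EE, S.EE]
  have h1 : S.psi φ x = ∑ i ∈ t, S.psi φ (S.E i * (x * S.E i)) := by
    have hdecx : x = ∑ i ∈ t, ∑ j ∈ t, S.E i * (x * S.E j) := by
      calc x = (∑ i ∈ t, S.E i) * (x * (∑ j ∈ t, S.E j)) := by rw [htr, htl]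
      _ = ∑ i ∈ t, ∑ j ∈ t, S.E i * (x * S.E j) := by
          simp only [Finset.mul_sum, Finset.sum_mul]
          first | rfl | exact Finset.sum_comm | exact Finset.sum_comm.symm
    conv_lhs => rw [hdecx]
    rw [map_sum]
    refine Finset.sum_congr rfl fun i hi => ?_
    rw [map_sum, Finset.sum_eq_single_of_mem i hi]
    intro b _ hb
    exact S.psi_off φ i b (fun h => hb h.symm) _ (hcomp i b)
  have h2 : ∀ i : S.I, S.psi φ (S.E i * (x * S.E i))
      = ∑ m, ∑ l, φ ⟨ε l * (S.p i m * (x * ε l)), hεpxε_mem i m l⟩ := by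
    intro i
    rw [S.psi_diag φ i _ (hcomp i i)]
    have hT : S.T i (S.E i * (x * S.E i))
        = ∑ m, ∑ l, (S.v i m * (x * ε l)) * (ε l * S.u i m) := by
      rw [S.T_apply]
      refine Finset.sum_congr rfl fun m _ => ?_
      calc S.v i m * ((S.E i * (x * S.E i)) * S.u i m)
          = (S.v i m * S.E i) * (x * (S.E i * S.u i m)) := by simp only [mul_assoc]
        _ = S.v i m * (x * S.u i m) := by rw [S.vE, S.Eu]
        _ = S.v i m * ((x * e) * S.u i m) := by rw [hxr]
        _ = S.v i m * ((x * (∑ l, ε l)) * S.u i m) := by rw [hsum]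
        _ = ∑ l, S.v i m * ((x * ε l) * S.u i m) := by
            simp only [Finset.mul_sum, Finset.sum_mul]
        _ = ∑ l, (S.v i m * (x * ε l)) * (ε l * S.u i m) := by
            refine Finset.sum_congr rfl fun l _ => ?_
            conv_lhs => rw [← hεε l]
            simp only [mul_assoc]
    have hmemprod : ∀ (m : Fin (S.n i)) (l : Fin nε),
        (S.v i m * (x * ε l)) * (ε l * S.u i m) ∈ subCorner A e e :=
      fun m l => corner_mul hee (hvxε i m l) (hεu i m l)
    rw [phi_congr φ hT (hy := Submodule.sum_mem _ fun m _ =>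
      Submodule.sum_mem _ fun l _ => hmemprod m l)]
    rw [phi_sum φ _ _ (fun m => Submodule.sum_mem _ fun l _ => hmemprod m l)]
    refine Finset.sum_congr rfl fun m _ => ?_
    rw [phi_sum φ Finset.univ _ (fun l => hmemprod m l)]
    refine Finset.sum_congr rfl fun l _ => ?_
    have hswap : (ε l * S.u i m) * (S.v i m * (x * ε l)) = ε l * (S.p i m * (x * ε l)) := by
      conv_rhs => rw [← S.uv i m]
      simp only [mul_assoc]
    calc φ ⟨(S.v i m * (x * ε l)) * (ε l * S.u i m), hmemprod m l⟩
        = φ ⟨(ε l * S.u i m) * (S.v i m * (x * ε l)),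
            corner_mul hee (hεu i m l) (hvxε i m l)⟩ :=
          hφ _ _ (hvxε i m l) (hεu i m l) _ _
      _ = φ ⟨ε l * (S.p i m * (x * ε l)), hεpxε_mem i m l⟩ := phi_congr φ hswap
  have hA : S.psi φ x = ∑ l, φ ⟨ε l * (x * ε l), hεxε_mem l l⟩ := by
    rw [h1, Finset.sum_congr rfl (fun i _ => h2 i)]
    calc ∑ i ∈ t, ∑ m, ∑ l, φ ⟨ε l * (S.p i m * (x * ε l)), hεpxε_mem i m l⟩
        = ∑ i ∈ t, ∑ l, ∑ m, φ ⟨ε l * (S.p i m * (x * ε l)), hεpxε_mem i m l⟩ :=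
          Finset.sum_congr rfl fun i _ => Finset.sum_comm
      _ = ∑ l, ∑ i ∈ t, ∑ m, φ ⟨ε l * (S.p i m * (x * ε l)), hεpxε_mem i m l⟩ :=
          Finset.sum_comm
      _ = ∑ l, φ ⟨ε l * (x * ε l), hεxε_mem l l⟩ := by
          refine Finset.sum_congr rfl fun l _ => ?_
          rw [Finset.sum_congr rfl (fun i (_ : i ∈ t) =>
            (phi_sum φ Finset.univ _ (fun m => hεpxε_mem i m l)
              (Submodule.sum_mem _ fun m _ => hεpxε_mem i m l)).symm)]
          rw [← phi_sum φ t _ (fun i => Submodule.sum_mem _ fun m _ => hεpxε_mem i m l)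
            (Submodule.sum_mem _ fun i _ => Submodule.sum_mem _ fun m _ => hεpxε_mem i m l)]
          refine phi_congr φ ?_
          calc ∑ i ∈ t, ∑ m, ε l * (S.p i m * (x * ε l))
              = ∑ i ∈ t, ε l * (S.E i * (x * ε l)) := by
                refine Finset.sum_congr rfl fun i _ => ?_
                rw [← S.psum i]
                simp only [Finset.sum_mul, Finset.mul_sum]
            _ = ε l * ((∑ i ∈ t, S.E i) * (x * ε l)) := by
                simp only [Finset.mul_sum, Finset.sum_mul]
            _ = ε l * (x * ε l) := by
                have h5 : (∑ i ∈ t, S.E i) * (x * ε l) = x * ε l := by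
                  rw [← mul_assoc, htl]
                rw [h5]
  rw [hA, hB]

end GenSetup

end Aux4
section Aux5

variable {A : Type u} [NonUnitalRing A] [Module ℂ A] [SMulCommClass ℂ A A] [IsScalarTower ℂ A A]
variable {e : A}

namespace GenSetup

lemma slf_determined (S : GenSetup A e) (ψ : A →ₗ[ℂ] ℂ)
    (hψ : ∀ a b : A, ψ (a * b) = ψ (b * a))
    (hψ0 : ∀ x ∈ subCorner A e e, ψ x = 0) : ∀ x : A, ψ x = 0 := by
  intro x
  have hker : (⊤ : Submodule ℂ A) ≤ LinearMap.ker ψ := by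
    rw [← S.hsup]
    refine iSup_le fun q => ?_
    rcases q with ⟨i, j⟩
    intro z hz
    rw [LinearMap.mem_ker]
    have zl : S.E i * z = z := S.Cp_left hz
    have zr : z * S.E j = z := S.Cp_right hz
    by_cases hij : i = j
    · subst hij
      have hz2 : z = ∑ m, ∑ m', S.p i m * (z * S.p i m') := by
        calc z = S.E i * (z * S.E i) := by rw [zr, zl]
        _ = (∑ m, S.p i m) * (z * (∑ m', S.p i m')) := by rw [S.psum]
        _ = ∑ m, ∑ m', S.p i m * (z * S.p i m') := by
            simp only [Finset.mul_sum, Finset.sum_mul]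
            first | rfl | exact Finset.sum_comm | exact Finset.sum_comm.symm
      have hz3 : ψ z = ∑ m, ∑ m', ψ (S.p i m * (z * S.p i m')) := by
        conv_lhs => rw [hz2]
        simp only [map_sum]
      rw [hz3]
      refine Finset.sum_eq_zero fun m _ => Finset.sum_eq_zero fun m' _ => ?_
      by_cases hmm : m = m'
      · subst hmm
        have h3 : S.p i m * (z * S.p i m)
            = S.u i m * ((S.v i m * (z * S.u i m)) * S.v i m) := by
          conv_lhs => rw [← S.uv i m]
          simp only [mul_assoc]
        rw [h3, hψ (S.u i m) _]
        have h4 : ((S.v i m * (z * S.u i m)) * S.v i m) * S.u i m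
            = S.v i m * (z * S.u i m) := by
          simp only [mul_assoc]
          rw [S.uvu]
        rw [h4]
        exact hψ0 _ (S.vxu_mem i i m m z)
      · rw [hψ (S.p i m) _]
        have h5 : (z * S.p i m') * S.p i m = 0 := by
          rw [mul_assoc, S.porth i m' m (fun h => hmm h.symm), mul_zero]
        rw [h5, map_zero]
    · have hz4 : z = S.E i * (z * S.E j) := by rw [zr, zl]
      conv_lhs => rw [hz4]
      rw [hψ (S.E i) _]
      have h6 : (z * S.E j) * S.E i = 0 := by
        rw [mul_assoc, S.Eorth j i (fun h => hij h.symm), mul_zero]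
      rw [h6, map_zero]
  exact LinearMap.mem_ker.mp (hker Submodule.mem_top)

end GenSetup

end Aux5

/-- If `A` is AUF and `e` is a generating idempotent, then restriction to the
corner `eAe` is a ℂ-linear bijection `SLF(A) ≃ SLF(eAe)`. -/
theorem stmt_13 {A : Type u} [NonUnitalRing A] [Module ℂ A] [SMulCommClass ℂ A A]
    [IsScalarTower ℂ A A] (hA : IsAUF A) (e : A) (hgen : IsGenIdem A e) :
    -- restriction is injective on symmetric linear functionals
    (∀ ψ₁ ψ₂ : A →ₗ[ℂ] ℂ, IsSLF A ψ₁ → IsSLF A ψ₂ →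
      (∀ x ∈ subCorner A e e, ψ₁ x = ψ₂ x) → ψ₁ = ψ₂) ∧
    -- restriction is surjective onto symmetric linear functionals of eAe
    (∀ φ : ↥(subCorner A e e) →ₗ[ℂ] ℂ,
      (∀ (x y : A) (hx : x ∈ subCorner A e e) (hy : y ∈ subCorner A e e)
        (hxy : x * y ∈ subCorner A e e) (hyx : y * x ∈ subCorner A e e),
          φ ⟨x * y, hxy⟩ = φ ⟨y * x, hyx⟩) →
      ∃ ψ : A →ₗ[ℂ] ℂ, IsSLF A ψ ∧ ∀ (x : A) (hx : x ∈ subCorner A e e), ψ x = φ ⟨x, hx⟩) := by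
  classical
  obtain ⟨I, E, hEidem, hEorth, hFD, hsupIJ⟩ := hA
  obtain ⟨hee, nε, ε, hεprim, hεorthO, hesum, hgen'⟩ := hgen
  have hee' : e * e = e := hee
  have hεε : ∀ k, ε k * ε k = ε k := fun k => (hεprim k).1
  have hεorth : ∀ k l, k ≠ l → ε k * ε l = 0 := fun k l h => (hεorthO k l h).1
  have hesum' : (∑ k, ε k) = e := hesum.symm
  have heε : ∀ k, e * ε k = ε k := by
    intro k
    rw [← hesum', Finset.sum_mul, Finset.sum_eq_single_of_mem k (Finset.mem_univ k)]
    · exact hεε k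
    · intro b _ hb; exact hεorth b k hb
  have hεe : ∀ k, ε k * e = ε k := by
    intro k
    rw [← hesum', Finset.mul_sum, Finset.sum_eq_single_of_mem k (Finset.mem_univ k)]
    · exact hεε k
    · intro b _ hb; exact hεorth k b (Ne.symm hb)
  choose N P hPprim hPorth hPsub hPsum using fun i : I =>
    exists_prim_decomp (Module.finrank ℂ (subCorner A (E i) (E i))) (E i) (hEidem i)
      (hFD i i) le_rfl
  choose κ hκ using fun i m => hgen' (P i m) (hPprim i m)
  choose U V hU hV hUV hVU using hκ
  have hPP : ∀ i m, P i m * P i m = P i m := fun i m => (hPprim i m).1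
  have hUε : ∀ i m, U i m * ε (κ i m) = U i m := by
    intro i m
    calc U i m * ε (κ i m) = (P i m * U i m * ε (κ i m)) * ε (κ i m) := by rw [hU i m]
    _ = P i m * U i m * (ε (κ i m) * ε (κ i m)) := by simp only [mul_assoc]
    _ = P i m * U i m * ε (κ i m) := by rw [hεε]
    _ = U i m := hU i m
  have hPU : ∀ i m, P i m * U i m = U i m := by
    intro i m
    calc P i m * U i m = P i m * (P i m * U i m * ε (κ i m)) := by rw [hU i m]
    _ = (P i m * P i m) * (U i m * ε (κ i m)) := by simp only [mul_assoc]
    _ = P i m * (U i m * ε (κ i m)) := by rw [hPP]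
    _ = P i m * U i m * ε (κ i m) := by rw [mul_assoc]
    _ = U i m := hU i m
  have hUe : ∀ i m, U i m * e = U i m := by
    intro i m
    calc U i m * e = (U i m * ε (κ i m)) * e := by rw [hUε]
    _ = U i m * (ε (κ i m) * e) := by rw [mul_assoc]
    _ = U i m * ε (κ i m) := by rw [hεe]
    _ = U i m := hUε i m
  have hεV : ∀ i m, ε (κ i m) * V i m = V i m := by
    intro i m
    calc ε (κ i m) * V i m = ε (κ i m) * (ε (κ i m) * V i m * P i m) := by rw [hV i m]
    _ = (ε (κ i m) * ε (κ i m)) * (V i m * P i m) := by simp only [mul_assoc]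
    _ = ε (κ i m) * (V i m * P i m) := by rw [hεε]
    _ = ε (κ i m) * V i m * P i m := by rw [mul_assoc]
    _ = V i m := hV i m
  have hVP : ∀ i m, V i m * P i m = V i m := by
    intro i m
    calc V i m * P i m = (ε (κ i m) * V i m * P i m) * P i m := by rw [hV i m]
    _ = ε (κ i m) * V i m * (P i m * P i m) := by simp only [mul_assoc]
    _ = ε (κ i m) * V i m * P i m := by rw [hPP]
    _ = V i m := hV i m
  have hVe : ∀ i m, e * V i m = V i m := by
    intro i m
    calc e * V i m = e * (ε (κ i m) * V i m) := by rw [hεV]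
    _ = (e * ε (κ i m)) * V i m := by rw [mul_assoc]
    _ = ε (κ i m) * V i m := by rw [heε]
    _ = V i m := hεV i m
  have hUVU : ∀ i m, U i m * (V i m * U i m) = U i m := by
    intro i m
    rw [hVU, hUε]
  let S : GenSetup A e :=
    { I := I
      dec := Classical.decEq I
      E := E
      EE := fun i => hEidem i
      Eorth := fun i j h => (hEorth i j h).1
      hsup := by rw [iSup_prod]; exact hsupIJ
      n := N
      p := P
      u := U
      v := V
      psum := hPsum
      porth := hPorth
      pE := fun i m => (hPsub i m).1
      Ep := fun i m => (hPsub i m).2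
      pu := hPU
      ue := hUe
      ev := hVe
      vp := hVP
      uv := hUV
      uvu := hUVU }
  constructor
  · intro ψ₁ ψ₂ h₁ h₂ hagree
    have h0 : ∀ x : A, (ψ₁ - ψ₂) x = 0 := by
      refine S.slf_determined (ψ₁ - ψ₂) ?_ ?_
      · intro a b
        simp only [LinearMap.sub_apply, h₁ a b, h₂ a b]
      · intro x hx
        simp only [LinearMap.sub_apply, hagree x hx, sub_self]
    ext x
    have h := h0 x
    simp only [LinearMap.sub_apply, sub_eq_zero] at h
    exact h
  · intro φ hφ
    refine ⟨S.psi φ, ?_, ?_⟩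
    · intro x y
      exact S.psi_symm hee' φ hφ x y
    · intro x hx
      exact S.psi_restrict hee' φ hφ nε ε hesum' hεε hεorth x hx
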